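/- Let f : ℝ → ℝ be continuously differentiable on [0,1] and set M(n) = ∫₀¹ xⁿ f(x) dx for n ∈ ℕ. If (n+2)·M(n+2) − M(n+1) − (n+1)·M(n) = 0 for all n ∈ ℕ, then ∫₀¹ xⁿ · ( (x − x³)·f'(x) − (x² + x)·f(x) ) dx = 0 for all n ∈ ℕ. -/

import Mathlib

open MeasureTheory Real

/-- If the Mellin transform `M(n) = ∫₀¹ xⁿ f(x) dx` of a continuously
differentiable function `f` satisfies `(n+2)M(n+2) − M(n+1) − (n+1)M(n) = 0`,
then `f` satisfies the Mellin-transformed differential equation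
`∫₀¹ xⁿ·((x − x³)f'(x) − (x² + x)f(x)) dx = 0`. -/
theorem inverse_mellin_ode (f : ℝ → ℝ)
    (hf : ContDiffOn ℝ 1 f (Set.Icc 0 1))
    (hrec : ∀ n : ℕ,
      ((n : ℝ) + 2) * (∫ x in (0:ℝ)..1, x ^ (n + 2) * f x) -
        (∫ x in (0:ℝ)..1, x ^ (n + 1) * f x) -
        ((n : ℝ) + 1) * (∫ x in (0:ℝ)..1, x ^ n * f x) = 0) :
    ∀ n : ℕ,
      ∫ x in (0:ℝ)..1,
        x ^ n * ((x - x ^ 3) * derivWithin f (Set.Icc 0 1) x -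
          (x ^ 2 + x) * f x) = 0 := by
  intro n
  have h01 : Set.uIcc (0:ℝ) 1 = Set.Icc 0 1 := Set.uIcc_of_le zero_le_one
  have hfc : ContinuousOn f (Set.Icc 0 1) := hf.continuousOn
  have hd : DifferentiableOn ℝ f (Set.Icc 0 1) := hf.differentiableOn one_ne_zero
  set g := derivWithin f (Set.Icc 0 1) with hg
  have hdc : ContinuousOn g (Set.Icc 0 1) :=
    hf.continuousOn_derivWithin (uniqueDiffOn_Icc zero_lt_one) le_rfl
  -- integrability of x^k * f
  have hint : ∀ k : ℕ, IntervalIntegrable (fun x => x ^ k * f x) volume 0 1 := by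
    intro k
    apply ContinuousOn.intervalIntegrable
    rw [h01]
    exact (continuous_pow k).continuousOn.mul hfc
  -- integration by parts with u = x^(n+1) - x^(n+3), v = f
  have hu' : IntervalIntegrable
      (fun x => ((n:ℝ)+1) * x ^ n - ((n:ℝ)+3) * x ^ (n+2)) volume 0 1 := by
    apply ContinuousOn.intervalIntegrable
    exact (Continuous.sub (by continuity) (by continuity)).continuousOn
  have hg' : IntervalIntegrable g volume 0 1 := by
    apply ContinuousOn.intervalIntegrable
    rw [h01]; exact hdc
  have ibp := intervalIntegral.integral_mul_deriv_eq_deriv_mul_of_hasDerivWithinAt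
      (a := (0:ℝ)) (b := 1)
      (u := fun x => x ^ (n+1) - x ^ (n+3)) (v := f)
      (u' := fun x => ((n:ℝ)+1) * x ^ n - ((n:ℝ)+3) * x ^ (n+2)) (v' := g)
      (fun x hx => by
        have h1 := (hasDerivAt_pow (n+1) x)
        have h2 := (hasDerivAt_pow (n+3) x)
        have := (h1.sub h2).hasDerivWithinAt (s := Set.uIcc (0:ℝ) 1)
        convert this using 1
        · rfl
        · rfl
        push_cast
        ring_nf)
      (fun x hx => by
        rw [h01] at hx ⊢
        exact (hd x hx).hasDerivWithinAt)
      hu' hg'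
  simp only [one_pow, zero_pow, Nat.succ_ne_zero] at ibp
  -- ibp : ∫ (x^(n+1)-x^(n+3)) * g = 0 - ∫ (...) * f
  have key : (∫ x in (0:ℝ)..1, (x ^ (n+1) - x ^ (n+3)) * g x)
      = - ∫ x in (0:ℝ)..1, (((n:ℝ)+1) * x ^ n - ((n:ℝ)+3) * x ^ (n+2)) * f x := by
    rw [ibp]
    simp [zero_pow]
  have hintuv : IntervalIntegrable (fun x => (x ^ (n+1) - x ^ (n+3)) * g x) volume 0 1 := by
    apply ContinuousOn.intervalIntegrable
    rw [h01]
    exact ((Continuous.sub (by continuity) (by continuity)).continuousOn).mul hdc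
  have hintw : IntervalIntegrable (fun x => (x ^ (n+2) + x ^ (n+1)) * f x) volume 0 1 := by
    have := (hint (n+2)).add (hint (n+1))
    apply this.congr
    exact (fun x _ => by simp only [Pi.add_apply]; ring)
  -- rewrite the goal integrand
  have hsplit : (∫ x in (0:ℝ)..1,
        x ^ n * ((x - x ^ 3) * g x - (x ^ 2 + x) * f x))
      = (∫ x in (0:ℝ)..1, (x ^ (n+1) - x ^ (n+3)) * g x)
        - ∫ x in (0:ℝ)..1, (x ^ (n+2) + x ^ (n+1)) * f x := by
    rw [← intervalIntegral.integral_sub hintuv hintw]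
    apply intervalIntegral.integral_congr
    intro x _
    ring
  rw [hsplit, key]
  have lin1 : (∫ x in (0:ℝ)..1, (((n:ℝ)+1) * x ^ n - ((n:ℝ)+3) * x ^ (n+2)) * f x)
      = ((n:ℝ)+1) * (∫ x in (0:ℝ)..1, x ^ n * f x)
        - ((n:ℝ)+3) * (∫ x in (0:ℝ)..1, x ^ (n+2) * f x) := by
    rw [← intervalIntegral.integral_const_mul, ← intervalIntegral.integral_const_mul,
      ← intervalIntegral.integral_sub ((hint n).const_mul _) ((hint (n+2)).const_mul _)]
    apply intervalIntegral.integral_congr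
    intro x _
    ring
  have lin2 : (∫ x in (0:ℝ)..1, (x ^ (n+2) + x ^ (n+1)) * f x)
      = (∫ x in (0:ℝ)..1, x ^ (n+2) * f x) + ∫ x in (0:ℝ)..1, x ^ (n+1) * f x := by
    rw [← intervalIntegral.integral_add (hint (n+2)) (hint (n+1))]
    apply intervalIntegral.integral_congr
    intro x _
    ring
  rw [lin1, lin2]
  have := hrec n
  linarith
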